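/- Let s, u ∈ ℂ with s ≠ 0, let A = [[s, 1], [0, s⁻¹]], B = [[s, 0], [−u, s⁻¹]] in SL₂(ℂ), W = B·A⁻¹·B⁻¹·A, W' = A·B⁻¹·A⁻¹·B, z = 2 + (2 − s² − s⁻²)u + u², and let n be an integer. If the Riley condition S_n(z) = (u² − (u+1)(s² + s⁻² − 3))·S_{n−1}(z) holds, then trace((W')^n · W^n) − 2 = u²·(s² + s⁻² + 2) / ((u+1)(s² + s⁻² − 2) − u²), and in particular the denominator (u+1)(s² + s⁻² − 2) − u² is nonzero. -/

import Mathlib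

open Matrix

private lemma zpow_formula (z : ℂ) (S : ℤ → ℂ)
    (hSm1 : S (-1) = 0) (hSm2 : S (-2) = -1)
    (hSrec : ∀ k : ℤ, S k = z * S (k - 1) - S (k - 2))
    (M : Matrix (Fin 2) (Fin 2) ℂ) (hM : M * M = z • M - 1) :
    ∀ m : ℤ, M ^ m = S (m - 1) • M - S (m - 2) • 1 := by
  have hinv : M * (z • (1 : Matrix (Fin 2) (Fin 2) ℂ) - M) = 1 := by
    rw [mul_sub, mul_smul_comm, mul_one, hM]; abel
  have hdet : IsUnit M.det := Matrix.isUnit_det_of_right_inverse hinv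
  have hMinv : M⁻¹ = z • (1 : Matrix (Fin 2) (Fin 2) ℂ) - M :=
    Matrix.inv_eq_right_inv hinv
  intro m
  induction m using Int.induction_on with
  | zero => norm_num [hSm1, hSm2]
  | succ k ih =>
    have e1 : ((k : ℤ) + 1) - 1 = k := by ring
    have e2 : ((k : ℤ) + 1) - 2 = k - 1 := by ring
    rw [Matrix.zpow_add_one hdet, ih, e1, e2, hSrec (k : ℤ)]
    rw [sub_mul, smul_mul_assoc, smul_mul_assoc, one_mul, hM]
    module
  | pred k ih =>
    have e1 : (-(k : ℤ) - 1) - 1 = -k - 2 := by ring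
    have e2 : (-(k : ℤ) - 1) - 2 = -k - 3 := by ring
    have hr := hSrec (-(k : ℤ) - 1)
    rw [e1, e2] at hr
    rw [Matrix.zpow_sub_one hdet, ih, hMinv, e1, e2]
    rw [sub_mul, smul_mul_assoc, smul_mul_assoc, one_mul, mul_sub, mul_smul_comm,
      mul_one, hM, hr]
    module

set_option maxHeartbeats 2000000 in
/-- Let `s, u ∈ ℂ` with `s ≠ 0`, let `A = !![s, 1; 0, s⁻¹]`, `B = !![s, 0; -u, s⁻¹]`,
`W = B * A⁻¹ * B⁻¹ * A`, `W' = A * B⁻¹ * A⁻¹ * B`, `z = 2 + (2 - s² - s⁻²)u + u²`, and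
let `n` be an integer. If the Riley condition
`S n = (u² - (u+1)(s² + s⁻² - 3)) * S (n-1)` holds, then
`trace((W')^n * W^n) - 2 = u²(s² + s⁻² + 2) / ((u+1)(s² + s⁻² - 2) - u²)`, and in
particular the denominator `(u+1)(s² + s⁻² - 2) - u²` is nonzero. -/
theorem trace_longitude_formula (s u z : ℂ) (hs : s ≠ 0)
    (hz : z = 2 + (2 - s ^ 2 - s⁻¹ ^ 2) * u + u ^ 2)
    (S : ℤ → ℂ) (hS0 : S 0 = 1) (hS1 : S 1 = z)
    (hSrec : ∀ k : ℤ, S k = z * S (k - 1) - S (k - 2))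
    (A B W W' : Matrix (Fin 2) (Fin 2) ℂ)
    (hA : A = !![s, 1; 0, s⁻¹]) (hB : B = !![s, 0; -u, s⁻¹])
    (hW : W = B * A⁻¹ * B⁻¹ * A) (hW' : W' = A * B⁻¹ * A⁻¹ * B)
    (n : ℤ)
    (hRiley : S n = (u ^ 2 - (u + 1) * (s ^ 2 + s⁻¹ ^ 2 - 3)) * S (n - 1)) :
    (u + 1) * (s ^ 2 + s⁻¹ ^ 2 - 2) - u ^ 2 ≠ 0 ∧
    (W' ^ n * W ^ n).trace - 2 =
      u ^ 2 * (s ^ 2 + s⁻¹ ^ 2 + 2) /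
        ((u + 1) * (s ^ 2 + s⁻¹ ^ 2 - 2) - u ^ 2) := by
  have hst : s * s⁻¹ = 1 := mul_inv_cancel₀ hs
  -- basic values of S
  have hSm1 : S (-1) = 0 := by
    have h := hSrec 1
    rw [show (1 : ℤ) - 1 = 0 by ring, show (1 : ℤ) - 2 = -1 by ring, hS0, hS1] at h
    linear_combination h
  have hSm2 : S (-2) = -1 := by
    have h := hSrec 0
    rw [show (0 : ℤ) - 1 = -1 by ring, show (0 : ℤ) - 2 = -2 by ring, hS0, hSm1] at h
    linear_combination h
  -- Chebyshev determinant identity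
  have hid : ∀ m : ℤ, S m ^ 2 + S (m - 1) ^ 2 - z * S m * S (m - 1) = 1 := by
    intro m
    induction m using Int.induction_on with
    | zero =>
      rw [show (0 : ℤ) - 1 = -1 by ring, hS0, hSm1]; ring
    | succ k ih =>
      have hr := hSrec ((k : ℤ) + 1)
      rw [show ((k : ℤ) + 1) - 1 = k by ring, show ((k : ℤ) + 1) - 2 = k - 1 by ring] at hr
      rw [show ((k : ℤ) + 1) - 1 = k by ring]
      linear_combination ih + (S ((k : ℤ) + 1) - S ((k : ℤ) - 1)) * hr
    | pred k ih =>
      have hr := hSrec (-(k : ℤ))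
      rw [show (-(k : ℤ)) - 1 = -k - 1 by ring, show (-(k : ℤ)) - 2 = -k - 2 by ring] at hr
      rw [show (-(k : ℤ) - 1) - 1 = -k - 2 by ring]
      linear_combination ih + (S (-(k : ℤ) - 2) - S (-(k : ℤ))) * hr
  -- explicit inverses
  have hAi : A⁻¹ = !![s⁻¹, -1; 0, s] := by
    apply Matrix.inv_eq_right_inv
    rw [hA, Matrix.mul_fin_two, Matrix.one_fin_two]
    ext i j
    fin_cases i <;> fin_cases j <;> simp <;> (try field_simp) <;> (try ring)
  have hBi : B⁻¹ = !![s⁻¹, 0; u, s] := by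
    apply Matrix.inv_eq_right_inv
    rw [hB, Matrix.mul_fin_two, Matrix.one_fin_two]
    ext i j
    fin_cases i <;> fin_cases j <;> simp <;> (try field_simp) <;> (try ring)
  -- explicit forms of W and W'
  have hWe : W = !![1 - s ^ 2 * u, s⁻¹ - s * u - s;
      -(s⁻¹ * u) + s * u ^ 2 + s * u, -(s⁻¹ ^ 2 * u) + u ^ 2 + 2 * u + 1] := by
    rw [hW, hAi, hBi, hA, hB]
    simp only [Matrix.mul_fin_two]
    ext i j
    fin_cases i <;> fin_cases j <;> simp <;> (try field_simp) <;> (try ring)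
  have hW'e : W' = !![1 + 2 * u + u ^ 2 - s ^ 2 * u, -s⁻¹ - s⁻¹ * u + s;
      s⁻¹ * u + s⁻¹ * u ^ 2 - s * u, -(s⁻¹ ^ 2 * u) + 1] := by
    rw [hW', hAi, hBi, hA, hB]
    simp only [Matrix.mul_fin_two]
    ext i j
    fin_cases i <;> fin_cases j <;> simp <;> (try field_simp) <;> (try ring)
  -- Cayley-Hamilton facts
  have hCH : W * W = z • W - 1 := by
    rw [hWe, Matrix.mul_fin_two, hz]
    ext i j
    fin_cases i <;> fin_cases j <;>
      simp [Matrix.smul_apply, Matrix.sub_apply, Matrix.one_apply, smul_eq_mul] <;>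
      (try field_simp) <;> (try ring)
  have hCH' : W' * W' = z • W' - 1 := by
    rw [hW'e, Matrix.mul_fin_two, hz]
    ext i j
    fin_cases i <;> fin_cases j <;>
      simp [Matrix.smul_apply, Matrix.sub_apply, Matrix.one_apply, smul_eq_mul] <;>
      (try field_simp) <;> (try ring)
  -- traces
  have htrW : W.trace = z := by
    rw [hWe, Matrix.trace_fin_two_of, hz]
    field_simp
    ring
  have htrW' : W'.trace = z := by
    rw [hW'e, Matrix.trace_fin_two_of, hz]
    field_simp
    ring
  have hT : (W' * W).trace = 2 - 2 * u ^ 2 - 2 * u ^ 3 + s ^ 4 * u ^ 2 + s⁻¹ ^ 4 * u ^ 2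
      - s ^ 2 * u ^ 3 - s⁻¹ ^ 2 * u ^ 3 := by
    rw [hW'e, hWe, Matrix.mul_fin_two, Matrix.trace_fin_two_of]
    linear_combination (-4 * u - 4 * u ^ 2 - 2 * u ^ 3) * hst
  -- relation between consecutive S values from the Riley condition
  have hb : S (n - 2) = (s ^ 2 + s⁻¹ ^ 2 - 1 - u) * S (n - 1) := by
    have hrn := hSrec n
    linear_combination hrn - hRiley + S (n - 1) * hz
  -- determinant identity specialized
  have hdetid := hid (n - 1)
  rw [show (n : ℤ) - 1 - 1 = n - 2 by ring, hb] at hdetid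
  have hQ1 : S (n - 1) ^ 2 *
      (((u + 1) * (s ^ 2 + s⁻¹ ^ 2 - 2) - u ^ 2) * (s ^ 2 + s⁻¹ ^ 2 - u - 2)) = 1 := by
    linear_combination hdetid + S (n - 1) ^ 2 * (s ^ 2 + s⁻¹ ^ 2 - 1 - u) * hz
  have hD : (u + 1) * (s ^ 2 + s⁻¹ ^ 2 - 2) - u ^ 2 ≠ 0 := by
    intro h
    have h1 : (1 : ℂ) = 0 := by rw [← hQ1, h]; ring
    exact one_ne_zero h1
  refine ⟨hD, ?_⟩
  -- power formulas
  have hWn := zpow_formula z S hSm1 hSm2 hSrec W hCH n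
  have hW'n := zpow_formula z S hSm1 hSm2 hSrec W' hCH' n
  rw [hWn, hW'n]
  have hexp : ((S (n - 1) • W' - S (n - 2) • 1) * (S (n - 1) • W - S (n - 2) • 1)).trace
      = S (n - 1) ^ 2 * (W' * W).trace - S (n - 1) * S (n - 2) * W'.trace
        - S (n - 2) * S (n - 1) * W.trace + S (n - 2) ^ 2 * 2 := by
    simp only [sub_mul, mul_sub, smul_mul_assoc, mul_smul_comm, one_mul, mul_one,
      Matrix.trace_sub, Matrix.trace_smul, smul_eq_mul, Matrix.trace_one,
      Fintype.card_fin, Nat.cast_ofNat]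
    ring
  rw [hexp, hT, htrW, htrW', hb, eq_div_iff hD]
  linear_combination
    (2 * ((u + 1) * (s ^ 2 + s⁻¹ ^ 2 - 2) - u ^ 2) + u ^ 2 * (s ^ 2 + s⁻¹ ^ 2 + 2)) * hQ1
    + ((4) * u ^ 2 * S (n - 1) ^ 2 + (4) * u ^ 3 * S (n - 1) ^ 2 + (2) * u ^ 4 * S (n - 1) ^ 2
      + (-2) * s⁻¹ ^ 2 * u ^ 2 * S (n - 1) ^ 2 + (-2) * s⁻¹ ^ 2 * u ^ 3 * S (n - 1) ^ 2
      + (4) * s * s⁻¹ * u ^ 2 * S (n - 1) ^ 2 + (4) * s * s⁻¹ * u ^ 3 * S (n - 1) ^ 2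
      + (2) * s * s⁻¹ * u ^ 4 * S (n - 1) ^ 2 + (-2) * s * s⁻¹ ^ 3 * u ^ 2 * S (n - 1) ^ 2
      + (-2) * s * s⁻¹ ^ 3 * u ^ 3 * S (n - 1) ^ 2 + (-2) * s ^ 2 * u ^ 2 * S (n - 1) ^ 2
      + (-2) * s ^ 2 * u ^ 3 * S (n - 1) ^ 2 + (-2) * s ^ 3 * s⁻¹ * u ^ 2 * S (n - 1) ^ 2
      + (-2) * s ^ 3 * s⁻¹ * u ^ 3 * S (n - 1) ^ 2) * hst
    - 2 * (s ^ 2 + s⁻¹ ^ 2 - 1 - u) * S (n - 1) ^ 2 *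
        ((u + 1) * (s ^ 2 + s⁻¹ ^ 2 - 2) - u ^ 2) * hz
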